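/- Let p1, p2 be points in the plane with ‖p1 − p2‖ ≤ 2, and let q be a point with ‖q − p1‖ > √2 and ‖q − p2‖ > √2. Then the closed unit disk centered at q does not intersect the line segment from p1 to p2; i.e., every point on the segment p1p2 is at distance greater than 1 from q. -/

import Mathlib

set_option maxHeartbeats 800000


theorem stmt_0 (p1 p2 q : EuclideanSpace ℝ (Fin 2))
    (h12 : dist p1 p2 ≤ 2)
    (hq1 : Real.sqrt 2 < dist q p1) (hq2 : Real.sqrt 2 < dist q p2) :
    ∀ x ∈ segment ℝ p1 p2, 1 < dist q x := by
  rintro x ⟨a, b, ha, hb, hab, rfl⟩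
  set u := q - p1 with hu
  set v := q - p2 with hv
  have hdecomp : q - (a • p1 + b • p2) = a • u + b • v := by
    rw [hu, hv]
    calc q - (a • p1 + b • p2) = (a + b) • q - (a • p1 + b • p2) := by
          rw [hab, one_smul]
      _ = a • (q - p1) + b • (q - p2) := by
          rw [add_smul, smul_sub, smul_sub]; abel
  have e1 : ‖a • u + b • v‖ ^ 2
      = a ^ 2 * ‖u‖ ^ 2 + b ^ 2 * ‖v‖ ^ 2 + 2 * a * b * inner ℝ u v := by
    rw [← real_inner_self_eq_norm_sq, ← real_inner_self_eq_norm_sq,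
      ← real_inner_self_eq_norm_sq]
    simp only [inner_add_add_self, real_inner_smul_left, real_inner_smul_right,
      real_inner_comm u v]
    ring
  have e2 : ‖u - v‖ ^ 2 = ‖u‖ ^ 2 + ‖v‖ ^ 2 - 2 * inner ℝ u v := by
    rw [← real_inner_self_eq_norm_sq, ← real_inner_self_eq_norm_sq,
      ← real_inner_self_eq_norm_sq]
    simp only [inner_sub_sub_self, real_inner_comm u v]
    ring
  have huv : u - v = p2 - p1 := by rw [hu, hv]; abel
  have hA : 2 < ‖u‖ ^ 2 := by
    have h0 : (0:ℝ) ≤ Real.sqrt 2 := Real.sqrt_nonneg 2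
    have : Real.sqrt 2 ^ 2 < ‖u‖ ^ 2 := by
      have := hq1
      rw [dist_eq_norm] at this
      nlinarith
    rwa [Real.sq_sqrt (by norm_num : (0:ℝ) ≤ 2)] at this
  have hB : 2 < ‖v‖ ^ 2 := by
    have h0 : (0:ℝ) ≤ Real.sqrt 2 := Real.sqrt_nonneg 2
    have : Real.sqrt 2 ^ 2 < ‖v‖ ^ 2 := by
      have := hq2
      rw [dist_eq_norm] at this
      nlinarith
    rwa [Real.sq_sqrt (by norm_num : (0:ℝ) ≤ 2)] at this
  have hC : ‖u - v‖ ^ 2 ≤ 4 := by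
    rw [huv]
    have : ‖p2 - p1‖ ≤ 2 := by rw [← dist_eq_norm, dist_comm]; exact h12
    nlinarith [norm_nonneg (p2 - p1)]
  have hI : (inner ℝ u v : ℝ) = (‖u‖ ^ 2 + ‖v‖ ^ 2 - ‖u - v‖ ^ 2) / 2 := by
    linarith [e2]
  have key : 1 < dist q (a • p1 + b • p2) ^ 2 := by
    rw [dist_eq_norm, hdecomp, e1, hI]
    generalize ‖u - v‖ ^ 2 = C at hC ⊢
    generalize ‖u‖ ^ 2 = A at hA ⊢
    generalize ‖v‖ ^ 2 = B at hB ⊢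
    obtain rfl : b = 1 - a := by linarith
    nlinarith [mul_nonneg ha (by linarith : (0:ℝ) ≤ A - 2),
      mul_nonneg hb (by linarith : (0:ℝ) ≤ B - 2),
      mul_nonneg (mul_nonneg ha hb) (by linarith : (0:ℝ) ≤ 4 - C),
      sq_nonneg (2 * a - 1)]
  have hd : (0:ℝ) ≤ dist q (a • p1 + b • p2) := dist_nonneg
  nlinarith [key, hd]
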